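/- For the censored maximum likelihood problem with parametric background b_γ, the first-order optimality condition in λ implies that the censored MLE signal strength satisfies λ*(F_n) = 1 − F_n(C)/B_{γ*(F_n)}(C), i.e., the estimated signal strength equals one minus the ratio of observed to expected (under the fitted background) probability in the control region. -/

import Mathlib

open MeasureTheory

/-- For the censored maximum likelihood with parametric background,
the first-order optimality condition in λ implies that an interior maximizer λ*
of the censored log-likelihood (at the fitted background b_{γ*}) satisfies
λ* = 1 − F_n(C)/B_{γ*}(C). -/
theorem stmt_8 (n : ℕ) (hn : 0 < n) (M : Fin n → ℝ) (S C : Set ℝ)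
    (hdisj : Disjoint S C) (hcover : ∀ i, M i ∈ S ∪ C)
    (bg : ℝ → ℝ) (BS BC : ℝ) (hBSBC : BS + BC = 1) (hBC0 : 0 < BC) (hBC1 : BC < 1)
    (hbg : ∀ i, M i ∈ C → 0 < bg (M i))
    (nS nC FnC : ℝ)
    (hnS : nS = ∑ i, Set.indicator S (fun _ => (1:ℝ)) (M i))
    (hnC : nC = ∑ i, Set.indicator C (fun _ => (1:ℝ)) (M i))
    (hFnC : FnC = nC / n)
    (L : ℝ → ℝ)
    (hL : ∀ l, L l = nS * Real.log ((1 - l) * BS + l)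
        + ∑ i, Set.indicator C (fun _ => Real.log ((1 - l) * bg (M i))) (M i))
    (lamStar : ℝ) (hmem : lamStar ∈ Set.Ioo (0:ℝ) 1)
    (hmax : ∀ l ∈ Set.Ioo (0:ℝ) 1, L l ≤ L lamStar) :
    lamStar = 1 - FnC / BC := by
  obtain ⟨hl0, hl1⟩ := hmem
  have h1l : (0:ℝ) < 1 - lamStar := by linarith
  have hA : (0:ℝ) < (1 - lamStar) * BS + lamStar := by nlinarith
  have hLfun : L = fun x => nS * Real.log ((1 - x) * BS + x)
      + ∑ i, Set.indicator C (fun _ => Real.log ((1 - x) * bg (M i))) (M i) := funext hL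
  -- derivative of L at lamStar
  have hD : HasDerivAt L (nS * (BC / ((1 - lamStar) * BS + lamStar))
      + nC * (-(1 / (1 - lamStar)))) lamStar := by
    rw [hLfun]
    have h1 : HasDerivAt (fun x : ℝ => nS * Real.log ((1 - x) * BS + x))
        (nS * (BC / ((1 - lamStar) * BS + lamStar))) lamStar := by
      have hf : HasDerivAt (fun x : ℝ => (1 - x) * BS + x) BC lamStar := by
        have h' : HasDerivAt (fun x : ℝ => (1 - x) * BS + x) ((-1) * BS + 1) lamStar :=
          ((((hasDerivAt_id lamStar).const_sub 1).mul_const BS)).add (hasDerivAt_id lamStar)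
        convert h' using 1
        linarith
      exact (hf.log hA.ne').const_mul nS
    have h2 : HasDerivAt
        (fun x : ℝ => ∑ i, Set.indicator C (fun _ => Real.log ((1 - x) * bg (M i))) (M i))
        (∑ i : Fin n, Set.indicator C (fun _ => -(1 / (1 - lamStar))) (M i)) lamStar := by
      apply HasDerivAt.fun_sum
      intro i _
      by_cases h : M i ∈ C
      · simp only [Set.indicator_of_mem h]
        have hb := hbg i h
        have hf : HasDerivAt (fun x : ℝ => (1 - x) * bg (M i)) (-(bg (M i))) lamStar := by
          have := ((hasDerivAt_id lamStar).const_sub 1).mul_const (bg (M i))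
          simpa using this
        have hne : (1 - lamStar) * bg (M i) ≠ 0 := by positivity
        have hlog := hf.log hne
        have hb' := hb.ne'
        have h1' := h1l.ne'
        rw [show -(1 / (1 - lamStar)) = -bg (M i) / ((1 - lamStar) * bg (M i)) by field_simp]
        exact hlog
      · simp only [Set.indicator_of_notMem h]
        exact hasDerivAt_const lamStar 0
    have hsum : (∑ i : Fin n, Set.indicator C (fun _ => -(1 / (1 - lamStar))) (M i))
        = nC * (-(1 / (1 - lamStar))) := by
      rw [hnC, Finset.sum_mul]
      apply Finset.sum_congr rfl
      intro i _
      by_cases h : M i ∈ C <;> simp [h]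
    have := h1.add h2
    rwa [hsum] at this
  have hloc : IsLocalMax L lamStar := by
    have hmemn : Set.Ioo (0:ℝ) 1 ∈ nhds lamStar := isOpen_Ioo.mem_nhds ⟨hl0, hl1⟩
    exact Filter.eventually_of_mem hmemn hmax
  have hzero := hloc.hasDerivAt_eq_zero hD
  have hsumn : nS + nC = n := by
    rw [hnS, hnC, ← Finset.sum_add_distrib]
    have hone : ∀ i ∈ Finset.univ, Set.indicator S (fun _ => (1:ℝ)) (M i)
        + Set.indicator C (fun _ => (1:ℝ)) (M i) = 1 := by
      intro i _
      rcases hcover i with h | h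
      · have hc : M i ∉ C := fun hc => (Set.disjoint_left.mp hdisj h) hc
        simp [Set.indicator_of_mem h, Set.indicator_of_notMem hc]
      · have hs : M i ∉ S := fun hs => (Set.disjoint_left.mp hdisj hs) h
        simp [Set.indicator_of_mem h, Set.indicator_of_notMem hs]
    rw [Finset.sum_congr rfl hone]
    simp
  have hn' : (0:ℝ) < n := by exact_mod_cast hn
  have hz : nS * BC * (1 - lamStar) = nC * ((1 - lamStar) * BS + lamStar) := by
    field_simp at hzero
    nlinarith [hzero]
  have key : (n:ℝ) * BC * (1 - lamStar) = nC := by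
    linear_combination (-(BC * (1 - lamStar))) * hsumn + hz + nC * (1 - lamStar) * hBSBC
  rw [hFnC, div_div]
  have hne : (n:ℝ) * BC ≠ 0 := by positivity
  field_simp
  nlinarith [key]
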